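/- Let A be a unital C*-algebra and let u = (u_{ij})_{i,j=1,2,3} be a 3×3 magic matrix over A. Then the entries of u pairwise commute: u_{ij} u_{kl} = u_{kl} u_{ij} for all i, j, k, l. -/

import Mathlib

section Aux
variable {A : Type*} [NormedRing A] [StarRing A] [CStarRing A]
    [NormedAlgebra ℂ A] [StarModule ℂ A] [CompleteSpace A]

lemma magic_myortho (p q r : A) (hp : IsSelfAdjoint p ∧ IsIdempotentElem p)
    (hq : IsSelfAdjoint q ∧ IsIdempotentElem q) (hr : IsSelfAdjoint r ∧ IsIdempotentElem r)
    (hsum : p + q + r = 1) : q * p = 0 := by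
  letI : CStarAlgebra A := ⟨⟩
  letI := CStarAlgebra.spectralOrder A
  haveI := CStarAlgebra.spectralOrderedRing A
  have h1 : p * q * p + p * r * p = 0 := by
    have h : q + r = 1 - p := by rw [← hsum]; abel
    have : p * (q + r) * p = p * q * p + p * r * p := by noncomm_ring
    rw [h] at this
    rw [← this]
    have := hp.2
    unfold IsIdempotentElem at this
    noncomm_ring [this]
  have key : ∀ a : A, IsSelfAdjoint a → IsIdempotentElem a →
      p * a * p = star (a * p) * (a * p) := by
    intro a ha hia
    rw [star_mul, ha.star_eq, hp.1.star_eq]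
    calc p * a * p = p * (a * a) * p := by rw [hia]
      _ = p * a * (a * p) := by noncomm_ring
  have hq0 : p * q * p = 0 := by
    have e1 : p * q * p = star (q * p) * (q * p) := key q hq.1 hq.2
    have e2 : p * r * p = star (r * p) * (r * p) := key r hr.1 hr.2
    have pos1 : (0:A) ≤ p * q * p := e1 ▸ star_mul_self_nonneg _
    have pos2 : (0:A) ≤ p * r * p := e2 ▸ star_mul_self_nonneg _
    have : p * q * p ≤ 0 := by
      rw [show p * q * p = -(p * r * p) from eq_neg_of_add_eq_zero_left h1]
      exact neg_nonpos.mpr pos2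
    exact le_antisymm this pos1
  have hn : ‖q * p‖ * ‖q * p‖ = 0 := by
    rw [← CStarRing.norm_star_mul_self, star_mul, hq.1.star_eq, hp.1.star_eq,
      show p * q * (q * p) = p * (q * q) * p from by noncomm_ring, hq.2, hq0, norm_zero]
  exact norm_eq_zero.mp (mul_self_eq_zero.mp hn)

lemma magic_key (p q r x y z w v s : A)
    (hp : star p = p) (hq : star q = q) (hr : star r = r)
    (e1 : x + q + y = 1) (e2 : z + y + r = 1) (e3 : w + v + r = 1)
    (e4 : p + x + w = 1) (e5 : p + s + z = 1) (e6 : s + q + v = 1)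
    (o1 : p * x = 0) (o2 : p * z = 0) (o3 : q * v = 0) (o4 : q * x = 0)
    (o5 : r * z = 0) (o6 : r * v = 0) : p * q = q * p := by
  have hy : p * y = p - p * r := by
    rw [show y = 1 - z - r from by rw [← e2]; abel, mul_sub, mul_sub, mul_one, o2, sub_zero]
  have h1 : p * q = p * r := by
    rw [show q = 1 - x - y from by rw [← e1]; abel, mul_sub, mul_sub, mul_one, o1, sub_zero, hy]
    abel
  have hw : q * w = q - q * p := by
    rw [show w = 1 - p - x from by rw [← e4]; abel, mul_sub, mul_sub, mul_one, o4, sub_zero]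
  have h2 : q * r = q * p := by
    rw [show r = 1 - w - v from by rw [← e3]; abel, mul_sub, mul_sub, mul_one, o3, sub_zero, hw]
    abel
  have hs' : r * s = r - r * q := by
    rw [show s = 1 - q - v from by rw [← e6]; abel, mul_sub, mul_sub, mul_one, o6, sub_zero]
  have h3 : r * p = r * q := by
    rw [show p = 1 - s - z from by rw [← e5]; abel, mul_sub, mul_sub, mul_one, o5, sub_zero, hs']
    abel
  calc p * q = star (q * p) := by rw [star_mul, hp, hq]
    _ = star (q * r) := by rw [h2]
    _ = r * q := by rw [star_mul, hq, hr]
    _ = r * p := h3.symm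
    _ = star (p * r) := by rw [star_mul, hp, hr]
    _ = star (p * q) := by rw [h1]
    _ = q * p := by rw [star_mul, hp, hq]

lemma magic_sum_perm (f : Fin 3 → A) (i k m : Fin 3) (h1 : i ≠ k) (h2 : i ≠ m) (h3 : k ≠ m)
    (hs : ∑ x, f x = 1) : f i + f k + f m = 1 := by
  rw [Fin.sum_univ_three] at hs
  replace hs : f ⟨0, by decide⟩ + f ⟨1, by decide⟩ + f ⟨2, by decide⟩ = 1 := hs
  fin_cases i <;> fin_cases k <;> fin_cases m <;>
    first
      | exact absurd rfl h1
      | exact absurd rfl h2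
      | exact absurd rfl h3
      | exact Eq.trans (by abel) hs

lemma magic_third : ∀ i k : Fin 3, i ≠ k → ∃ m, i ≠ m ∧ k ≠ m := by decide

end Aux

/-- the entries of a `3×3` magic matrix over a unital C*-algebra pairwise
commute. -/
theorem magic_three_by_three_commutes {A : Type*} [NormedRing A] [StarRing A] [CStarRing A]
    [NormedAlgebra ℂ A] [StarModule ℂ A] [CompleteSpace A]
    (u : Fin 3 → Fin 3 → A)
    (hproj : ∀ i j, IsSelfAdjoint (u i j) ∧ IsIdempotentElem (u i j))
    (hrow : ∀ i, ∑ j, u i j = 1) (hcol : ∀ j, ∑ i, u i j = 1) :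
    ∀ i j k l, Commute (u i j) (u k l) := by
  have horr : ∀ i j l, j ≠ l → u i j * u i l = 0 := by
    intro i j l hjl
    obtain ⟨n, hn1, hn2⟩ := magic_third j l hjl
    exact magic_myortho (u i l) (u i j) (u i n) (hproj i l) (hproj i j) (hproj i n)
      (magic_sum_perm (u i) l j n hjl.symm hn2 hn1 (hrow i))
  have horc : ∀ j i k, i ≠ k → u i j * u k j = 0 := by
    intro j i k hik
    obtain ⟨m, hm1, hm2⟩ := magic_third i k hik
    exact magic_myortho (u k j) (u i j) (u m j) (hproj k j) (hproj i j) (hproj m j)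
      (magic_sum_perm (fun a => u a j) k i m hik.symm hm2 hm1 (hcol j))
  intro i j k l
  rcases eq_or_ne i k with rfl | hik
  · rcases eq_or_ne j l with rfl | hjl
    · exact Commute.refl _
    · show u i j * u i l = u i l * u i j
      rw [horr i j l hjl, horr i l j hjl.symm]
  · rcases eq_or_ne j l with rfl | hjl
    · show u i j * u k j = u k j * u i j
      rw [horc j i k hik, horc j k i hik.symm]
    · obtain ⟨m, him, hkm⟩ := magic_third i k hik
      obtain ⟨n, hjn, hln⟩ := magic_third j l hjl
      exact magic_key (u i j) (u k l) (u m n) (u i l) (u m l) (u m j) (u i n) (u k n) (u k j)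
        (hproj i j).1.star_eq (hproj k l).1.star_eq (hproj m n).1.star_eq
        (magic_sum_perm (fun a => u a l) i k m hik him hkm (hcol l))
        (magic_sum_perm (u m) j l n hjl hjn hln (hrow m))
        (magic_sum_perm (fun a => u a n) i k m hik him hkm (hcol n))
        (magic_sum_perm (u i) j l n hjl hjn hln (hrow i))
        (magic_sum_perm (fun a => u a j) i k m hik him hkm (hcol j))
        (magic_sum_perm (u k) j l n hjl hjn hln (hrow k))
        (horr i j l hjl) (horc j i m him) (horr k l n hln) (horc l k i hik.symm)
        (horr m n j hjn.symm) (horc n m k hkm.symm)
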